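/- Correctness of backtracking pruning along sequence/fork positions: define SeqForkSub to be the smallest relation on process trees such that SeqForkSub P P for every P; SeqForkSub (seq P₁ P₂) Q whenever SeqForkSub P₁ Q or SeqForkSub P₂ Q; and SeqForkSub (fork Ps) Q whenever SeqForkSub Pᵢ Q for some Pᵢ in Ps. If every operation value s and e occurring in the process tree P is nonnegative and every loop multiplier and routing probability occurring in P is nonnegative, then for every Q with SeqForkSub P Q one has S(P) ≥ S(Q) and E(P) ≥ E(Q). Consequently, if a sub-composition Q reached only through sequences and forks already violates an SLA bound (S(Q) > MaxS or E(Q) > MaxE), then the whole composition P violates that bound, so no completion of the corresponding partial assignment can be feasible. -/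

import Mathlib

inductive PTree : Type
  | op : ℝ → ℝ → PTree
  | seq : PTree → PTree → PTree
  | fork : List PTree → PTree
  | loop : ℝ → PTree → PTree
  | xor : List (ℝ × PTree) → PTree
  | ior : ℝ → ℝ → ℝ → PTree → PTree → PTree

theorem PTree.sizeOf_snd_lt (q : ℝ × PTree) : sizeOf q.2 < sizeOf q := by
  obtain ⟨a, b⟩ := q; simp only [Prod.mk.sizeOf_spec]; omega

noncomputable def S : PTree → ℝ
  | .op s _ => s
  | .seq P₁ P₂ => S P₁ + S P₂
  | .fork Ps => (Ps.attach.map (fun ⟨P, _⟩ => S P)).foldr max 0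
  | .loop m P => m * S P
  | .xor qs => (qs.attach.map (fun ⟨q, _⟩ => q.1 * S q.2)).sum
  | .ior p₁ p₂ pp P₁ P₂ => p₁ * S P₁ + p₂ * S P₂ + pp * max (S P₁) (S P₂)
decreasing_by all_goals
  simp_wf
  all_goals first
    | omega
    | (have := List.sizeOf_lt_of_mem ‹_ ∈ _›
       first
         | omega
         | (have := PTree.sizeOf_snd_lt ‹ℝ × PTree›; omega))

noncomputable def E : PTree → ℝ
  | .op _ e => e
  | .seq P₁ P₂ => E P₁ + E P₂
  | .fork Ps => (Ps.attach.map (fun ⟨P, _⟩ => E P)).sum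
  | .loop m P => m * E P
  | .xor qs => (qs.attach.map (fun ⟨q, _⟩ => q.1 * E q.2)).sum
  | .ior p₁ p₂ pp P₁ P₂ => p₁ * E P₁ + p₂ * E P₂ + pp * (E P₁ + E P₂)
decreasing_by all_goals
  simp_wf
  all_goals first
    | omega
    | (have := List.sizeOf_lt_of_mem ‹_ ∈ _›
       first
         | omega
         | (have := PTree.sizeOf_snd_lt ‹ℝ × PTree›; omega))

/-- Every operation value, loop multiplier and routing probability in the tree is nonnegative. -/
inductive Nonneg : PTree → Prop
  | op {s e : ℝ} : 0 ≤ s → 0 ≤ e → Nonneg (.op s e)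
  | seq {P₁ P₂ : PTree} : Nonneg P₁ → Nonneg P₂ → Nonneg (.seq P₁ P₂)
  | fork {Ps : List PTree} : (∀ P ∈ Ps, Nonneg P) → Nonneg (.fork Ps)
  | loop {m : ℝ} {P : PTree} : 0 ≤ m → Nonneg P → Nonneg (.loop m P)
  | xor {qs : List (ℝ × PTree)} : (∀ q ∈ qs, 0 ≤ q.1) → (∀ q ∈ qs, Nonneg q.2) →
      Nonneg (.xor qs)
  | ior {p₁ p₂ pp : ℝ} {P₁ P₂ : PTree} : 0 ≤ p₁ → 0 ≤ p₂ → 0 ≤ pp →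
      Nonneg P₁ → Nonneg P₂ → Nonneg (.ior p₁ p₂ pp P₁ P₂)

/-- `SeqForkSub P Q` : `Q` is a sub-composition of `P` reached only through sequences and forks. -/
inductive SeqForkSub : PTree → PTree → Prop
  | refl (P : PTree) : SeqForkSub P P
  | seqL {P₁ P₂ Q : PTree} : SeqForkSub P₁ Q → SeqForkSub (.seq P₁ P₂) Q
  | seqR {P₁ P₂ Q : PTree} : SeqForkSub P₂ Q → SeqForkSub (.seq P₁ P₂) Q
  | fork {Ps : List PTree} {P Q : PTree} : P ∈ Ps → SeqForkSub P Q → SeqForkSub (.fork Ps) Q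

lemma foldr_max_nonneg (l : List ℝ) : (0:ℝ) ≤ l.foldr max 0 := by
  induction l with
  | nil => simp
  | cons a t ih => exact le_trans ih (le_max_right _ _)

lemma le_foldr_max {l : List ℝ} {x : ℝ} (hx : x ∈ l) : x ≤ l.foldr max 0 := by
  induction l with
  | nil => simp at hx
  | cons a t ih =>
    rcases List.mem_cons.mp hx with rfl | h
    · exact le_max_left _ _
    · exact le_trans (ih h) (le_max_right _ _)

@[simp] lemma S_op (a e : ℝ) : S (.op a e) = a := by rw [S]
@[simp] lemma S_seq (P₁ P₂ : PTree) : S (.seq P₁ P₂) = S P₁ + S P₂ := by rw [S]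
@[simp] lemma S_fork (Ps : List PTree) : S (.fork Ps) = (Ps.map S).foldr max 0 := by
  rw [S]; simp [List.attach_map_val]
@[simp] lemma S_loop (m : ℝ) (P : PTree) : S (.loop m P) = m * S P := by rw [S]
@[simp] lemma S_xor (qs : List (ℝ × PTree)) :
    S (.xor qs) = (qs.map (fun q => q.1 * S q.2)).sum := by
  rw [S]; simp [List.attach_map_val (f := fun q : ℝ × PTree => q.1 * S q.2)]
@[simp] lemma S_ior (p₁ p₂ pp : ℝ) (P₁ P₂ : PTree) :
    S (.ior p₁ p₂ pp P₁ P₂) = p₁ * S P₁ + p₂ * S P₂ + pp * max (S P₁) (S P₂) := by rw [S]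

@[simp] lemma E_op (a e : ℝ) : E (.op a e) = e := by rw [E]
@[simp] lemma E_seq (P₁ P₂ : PTree) : E (.seq P₁ P₂) = E P₁ + E P₂ := by rw [E]
@[simp] lemma E_fork (Ps : List PTree) : E (.fork Ps) = (Ps.map E).sum := by
  rw [E]; simp [List.attach_map_val]
@[simp] lemma E_loop (m : ℝ) (P : PTree) : E (.loop m P) = m * E P := by rw [E]
@[simp] lemma E_xor (qs : List (ℝ × PTree)) :
    E (.xor qs) = (qs.map (fun q => q.1 * E q.2)).sum := by
  rw [E]; simp [List.attach_map_val (f := fun q : ℝ × PTree => q.1 * E q.2)]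
@[simp] lemma E_ior (p₁ p₂ pp : ℝ) (P₁ P₂ : PTree) :
    E (.ior p₁ p₂ pp P₁ P₂) = p₁ * E P₁ + p₂ * E P₂ + pp * (E P₁ + E P₂) := by rw [E]

lemma S_nonneg {P : PTree} (hP : Nonneg P) : 0 ≤ S P := by
  induction hP with
  | op hs he => simpa using hs
  | seq _ _ ih1 ih2 => simpa using add_nonneg ih1 ih2
  | fork _ _ => rw [S_fork]; exact foldr_max_nonneg _
  | loop hm _ ih => simpa using mul_nonneg hm ih
  | @xor qs hp _ ih =>
    rw [S_xor]
    apply List.sum_nonneg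
    intro x hx
    simp only [List.mem_map] at hx
    obtain ⟨q, hq, rfl⟩ := hx
    exact mul_nonneg (hp q hq) (ih q hq)
  | @ior p₁ p₂ pp P₁ P₂ h1 h2 hp _ _ ih1 ih2 =>
    rw [S_ior]
    have hmax : 0 ≤ max (S P₁) (S P₂) := le_trans ih1 (le_max_left _ _)
    positivity

lemma E_nonneg {P : PTree} (hP : Nonneg P) : 0 ≤ E P := by
  induction hP with
  | op hs he => simpa using he
  | seq _ _ ih1 ih2 => simpa using add_nonneg ih1 ih2
  | @fork Ps _ ih =>
    rw [E_fork]
    apply List.sum_nonneg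
    intro x hx
    simp only [List.mem_map] at hx
    obtain ⟨q, hq, rfl⟩ := hx
    exact ih q hq
  | loop hm _ ih => simpa using mul_nonneg hm ih
  | @xor qs hp _ ih =>
    rw [E_xor]
    apply List.sum_nonneg
    intro x hx
    simp only [List.mem_map] at hx
    obtain ⟨q, hq, rfl⟩ := hx
    exact mul_nonneg (hp q hq) (ih q hq)
  | ior h1 h2 hp _ _ ih1 ih2 =>
    rw [E_ior]
    positivity

lemma le_S_fork {Ps : List PTree} {P : PTree} (h : P ∈ Ps) : S P ≤ S (.fork Ps) := by
  rw [S_fork]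
  exact le_foldr_max (List.mem_map_of_mem (f := S) h)

lemma le_E_fork {Ps : List PTree} {P : PTree} (hn : ∀ P ∈ Ps, Nonneg P) (h : P ∈ Ps) :
    E P ≤ E (.fork Ps) := by
  rw [E_fork]
  apply List.single_le_sum _ _ (List.mem_map_of_mem (f := E) h)
  intro x hx
  simp only [List.mem_map] at hx
  obtain ⟨q, hq, rfl⟩ := hx
  exact E_nonneg (hn q hq)

theorem seqForkSub_pruning (P : PTree) (hP : Nonneg P) :
    ∀ Q : PTree, SeqForkSub P Q →
      S Q ≤ S P ∧ E Q ≤ E P ∧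
      (∀ MaxS : ℝ, MaxS < S Q → MaxS < S P) ∧
      (∀ MaxE : ℝ, MaxE < E Q → MaxE < E P) := by
  have gen : ∀ P Q : PTree, SeqForkSub P Q → Nonneg P → S Q ≤ S P ∧ E Q ≤ E P := by
    intro P Q h
    induction h with
    | refl P => exact fun _ => ⟨le_refl _, le_refl _⟩
    | @seqL P₁ P₂ Q _ ih =>
      intro hn
      cases hn with
      | seq h1 h2 =>
        obtain ⟨hs, he⟩ := ih h1
        constructor
        · calc S Q ≤ S P₁ := hs
            _ ≤ S P₁ + S P₂ := le_add_of_nonneg_right (S_nonneg h2)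
            _ = S (.seq P₁ P₂) := (S_seq P₁ P₂).symm
        · calc E Q ≤ E P₁ := he
            _ ≤ E P₁ + E P₂ := le_add_of_nonneg_right (E_nonneg h2)
            _ = E (.seq P₁ P₂) := (E_seq P₁ P₂).symm
    | @seqR P₁ P₂ Q _ ih =>
      intro hn
      cases hn with
      | seq h1 h2 =>
        obtain ⟨hs, he⟩ := ih h2
        constructor
        · calc S Q ≤ S P₂ := hs
            _ ≤ S P₁ + S P₂ := le_add_of_nonneg_left (S_nonneg h1)
            _ = S (.seq P₁ P₂) := (S_seq P₁ P₂).symm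
        · calc E Q ≤ E P₂ := he
            _ ≤ E P₁ + E P₂ := le_add_of_nonneg_left (E_nonneg h1)
            _ = E (.seq P₁ P₂) := (E_seq P₁ P₂).symm
    | @fork Ps P' Q hmem _ ih =>
      intro hn0
      cases hn0 with
      | fork hn =>
        obtain ⟨hs, he⟩ := ih (hn P' hmem)
        exact ⟨le_trans hs (le_S_fork hmem), le_trans he (le_E_fork hn hmem)⟩
  intro Q h
  have key := gen P Q h hP
  exact ⟨key.1, key.2, fun _ h' => lt_of_lt_of_le h' key.1,
    fun _ h' => lt_of_lt_of_le h' key.2⟩
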